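/- Let $k \geq 2$ and let $u_0, u_1, \ldots, u_{k-1}$ be positive reals, and define $u_k = -(u_0 + \cdots + u_{k-1})$. Then the integral over $\mathbb{R}^{k-1}$ of $\exp\big(-\sum_{i=1}^{k-1} u_i x_i - u_k \min(0, x_1, \ldots, x_{k-1})\big)$ converges and equals $(u_0 + u_1 + \cdots + u_{k-1})/(u_0 u_1 \cdots u_{k-1})$. -/

import Mathlib

open MeasureTheory Real Set Filter

lemma SA.integrableOn_Ici {c : ℝ} (hc : 0 < c) (a : ℝ) :
    IntegrableOn (fun x : ℝ => Real.exp (-(c * x))) (Ici a) := by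
  rw [integrableOn_Ici_iff_integrableOn_Ioi]
  simpa [neg_mul] using exp_neg_integrableOn_Ioi a hc

lemma SA.integral_Ici {c : ℝ} (hc : 0 < c) (a : ℝ) :
    ∫ x in Ici a, Real.exp (-(c * x)) = Real.exp (-(c * a)) / c := by
  rw [← setIntegral_congr_set Ioi_ae_eq_Ici]
  have hder : ∀ x ∈ Ici a, HasDerivAt (fun y : ℝ => -Real.exp (-(c * y)) / c)
      (Real.exp (-(c * x))) x := by
    intro x _
    have h1 : HasDerivAt (fun y : ℝ => -(c * y)) (-c) x := by
      simpa using ((hasDerivAt_id x).const_mul (-c))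
    have h2 := (h1.exp.neg).div_const c
    exact h2.congr_deriv (by rw [div_eq_iff hc.ne']; ring)
  have htend : Tendsto (fun y : ℝ => -Real.exp (-(c * y)) / c) atTop (nhds 0) := by
    have h1 : Tendsto (fun y : ℝ => -(c * y)) atTop atBot := by
      exact tendsto_neg_atBot_iff.mpr (Tendsto.const_mul_atTop hc tendsto_id)
    have := (tendsto_exp_atBot.comp h1).neg.div_const c
    simpa using this
  have := integral_Ioi_of_hasDerivAt_of_tendsto' hder
    ((SA.integrableOn_Ici hc a).mono_set Ioi_subset_Ici_self) htend
  rw [this]; field_simp; ring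

lemma SA.integrableOn_Iic {c : ℝ} (hc : 0 < c) (a : ℝ) :
    IntegrableOn (fun t : ℝ => Real.exp (c * t)) (Iic a) := by
  rw [← integrable_indicator_iff measurableSet_Iic]
  have h : Integrable ((Ici (-a)).indicator (fun x : ℝ => Real.exp (-(c * x)))) := by
    rw [integrable_indicator_iff measurableSet_Ici]
    exact SA.integrableOn_Ici hc (-a)
  have := h.comp_neg
  apply this.congr
  filter_upwards with t
  by_cases ht : t ≤ a
  · rw [Set.indicator_of_mem (by simpa using ht : -t ∈ Ici (-a)),
      Set.indicator_of_mem (by simpa using ht : t ∈ Iic a)]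
    ring_nf
  · rw [Set.indicator_of_notMem (by simpa using ht),
      Set.indicator_of_notMem (by simpa using ht)]

lemma SA.integral_Iic {c : ℝ} (hc : 0 < c) (a : ℝ) :
    ∫ t in Iic a, Real.exp (c * t) = Real.exp (c * a) / c := by
  have hder : ∀ x ∈ Iic a, HasDerivAt (fun y : ℝ => Real.exp (c * y) / c)
      (Real.exp (c * x)) x := by
    intro x _
    have h1 : HasDerivAt (fun y : ℝ => c * y) c x := by
      simpa using ((hasDerivAt_id x).const_mul c)
    have h2 := h1.exp.div_const c
    exact h2.congr_deriv (by rw [div_eq_iff hc.ne'])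
  have htend : Tendsto (fun y : ℝ => Real.exp (c * y) / c) atBot (nhds 0) := by
    have h1 : Tendsto (fun y : ℝ => c * y) atBot atBot := Tendsto.const_mul_atBot hc tendsto_id
    have := (tendsto_exp_atBot.comp h1).div_const c
    simpa using this
  have := integral_Iic_of_hasDerivAt_of_tendsto' hder (SA.integrableOn_Iic hc a) htend
  rw [this]; ring

noncomputable def SA.M {n : ℕ} (x : Fin n → ℝ) : ℝ :=
  (insert (0:ℝ) (Finset.image x Finset.univ)).min' (Finset.insert_nonempty _ _)

lemma SA.le_M_iff {n : ℕ} (x : Fin n → ℝ) (t : ℝ) :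
    t ≤ SA.M x ↔ t ≤ 0 ∧ ∀ i, t ≤ x i := by
  constructor
  · intro h
    refine ⟨h.trans (Finset.min'_le _ _ (Finset.mem_insert_self _ _)), fun i =>
      h.trans (Finset.min'_le _ _ (Finset.mem_insert_of_mem
        (Finset.mem_image.2 ⟨i, Finset.mem_univ i, rfl⟩)))⟩
  · rintro ⟨h0, h⟩
    apply Finset.le_min'
    intro y hy
    rcases Finset.mem_insert.1 hy with rfl | hy
    · exact h0
    · obtain ⟨i, -, rfl⟩ := Finset.mem_image.1 hy
      exact h i

lemma SA.M_nonpos {n : ℕ} (x : Fin n → ℝ) : SA.M x ≤ 0 :=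
  ((SA.le_M_iff x _).1 le_rfl).1

lemma SA.aux (n : ℕ) (u0 : ℝ) (hu0 : 0 < u0) (v : Fin n → ℝ) (hv : ∀ i, 0 < v i) :
    Integrable (fun x : Fin n → ℝ =>
      Real.exp (-(∑ i, v i * x i - (u0 + ∑ i, v i) * SA.M x))) ∧
    ∫ x : Fin n → ℝ, Real.exp (-(∑ i, v i * x i - (u0 + ∑ i, v i) * SA.M x)) =
      (u0 + ∑ i, v i) / (u0 * ∏ i, v i) := by
  set S : ℝ := u0 + ∑ i, v i with hSdef
  have hS : 0 < S := by
    have h1 : 0 ≤ ∑ i, v i := Finset.sum_nonneg fun i _ => (hv i).le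
    rw [hSdef]; linarith
  have hPv : 0 < ∏ i, v i := Finset.prod_pos fun i _ => hv i
  set D : Set (ℝ × (Fin n → ℝ)) := {p | p.1 < 0 ∧ ∀ i, p.1 ≤ p.2 i} with hDdef
  have hD : MeasurableSet D := by
    have : D = {p : ℝ × (Fin n → ℝ) | p.1 < 0} ∩ ⋂ i, {p | p.1 ≤ p.2 i} := by
      ext p; simp [hDdef, Set.mem_iInter]
    rw [this]
    exact (measurableSet_lt measurable_fst measurable_const).inter
      (MeasurableSet.iInter fun i => measurableSet_le measurable_fst
        ((measurable_pi_apply i).comp measurable_snd))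
  set F : ℝ → (Fin n → ℝ) → ℝ := fun t x =>
    D.indicator (fun p => S * Real.exp (S * p.1)) (t, x) * ∏ i, Real.exp (-(v i * x i))
    with hFdef
  have hFnonneg : ∀ t x, 0 ≤ F t x := by
    intro t x
    apply mul_nonneg
    · exact Set.indicator_nonneg (fun p _ => by positivity) _
    · exact Finset.prod_nonneg fun i _ => (Real.exp_pos _).le
  -- measurability
  have hFmeas : AEStronglyMeasurable (Function.uncurry F) ((volume : Measure ℝ).prod volume) := by
    apply Measurable.aestronglyMeasurable
    apply Measurable.mul
    · exact (Measurable.indicator (by fun_prop) hD).comp measurable_id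
    · apply Finset.measurable_prod
      intro i _
      have : Measurable fun p : ℝ × (Fin n → ℝ) => p.2 i :=
        (measurable_pi_apply i).comp measurable_snd
      fun_prop
  -- section formula for t < 0
  have hFneg : ∀ t : ℝ, t < 0 → ∀ x, F t x =
      S * Real.exp (S * t) * ∏ i, (Ici t).indicator (fun s => Real.exp (-(v i * s))) (x i) := by
    intro t ht x
    by_cases h : ∀ i, t ≤ x i
    · rw [hFdef]
      simp only
      rw [Set.indicator_of_mem (show (t, x) ∈ D from ⟨ht, h⟩)]
      congr 1
      exact (Finset.prod_congr rfl fun i _ =>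
        (Set.indicator_of_mem (Set.mem_Ici.2 (h i)) (fun s => Real.exp (-(v i * s)))).symm)
    · rw [hFdef]
      simp only
      rw [Set.indicator_of_notMem (fun hD' => h hD'.2), zero_mul]
      obtain ⟨i, hi⟩ := not_forall.1 h
      rw [Finset.prod_eq_zero (Finset.mem_univ i) (Set.indicator_of_notMem hi _), mul_zero]
  have hFpos : ∀ t : ℝ, 0 ≤ t → ∀ x, F t x = 0 := by
    intro t ht x
    rw [hFdef]
    simp only
    rw [Set.indicator_of_notMem (fun hD' => absurd hD'.1 (not_lt.2 ht)), zero_mul]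
  -- sections integrable
  have hsecI : ∀ t : ℝ, Integrable (F t) (volume : Measure (Fin n → ℝ)) := by
    intro t
    rcases lt_or_ge t 0 with ht | ht
    · have : Integrable (fun x : Fin n → ℝ =>
          ∏ i, (Ici t).indicator (fun s => Real.exp (-(v i * s))) (x i)) := by
        apply Integrable.fintype_prod (f := fun i => (Ici t).indicator
          (fun s => Real.exp (-(v i * s))))
        intro i
        rw [integrable_indicator_iff measurableSet_Ici]
        exact SA.integrableOn_Ici (hv i) t
      exact (funext (hFneg t ht) ▸ this.const_mul (S * Real.exp (S * t)))
    · exact (funext (hFpos t ht) ▸ integrable_zero _ _ _)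
  -- integral of sections
  have hsecInt : ∀ t : ℝ, (∫ x : Fin n → ℝ, F t x) =
      (Iio 0).indicator (fun t => S / (∏ i, v i) * Real.exp (u0 * t)) t := by
    intro t
    rcases lt_or_ge t 0 with ht | ht
    · rw [Set.indicator_of_mem (Set.mem_Iio.2 ht)]
      calc (∫ x : Fin n → ℝ, F t x)
          = ∫ x : Fin n → ℝ, S * Real.exp (S * t) *
            ∏ i, (Ici t).indicator (fun s => Real.exp (-(v i * s))) (x i) := by
            exact integral_congr_ae (Eventually.of_forall (hFneg t ht))
        _ = S * Real.exp (S * t) * ∫ x : Fin n → ℝ,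
            ∏ i, (Ici t).indicator (fun s => Real.exp (-(v i * s))) (x i) :=
            integral_const_mul _ _
        _ = S * Real.exp (S * t) *
            ∏ i, ∫ s : ℝ, (Ici t).indicator (fun s => Real.exp (-(v i * s))) s := by
            rw [integral_fintype_prod_volume_eq_prod (f := fun i =>
              (Ici t).indicator (fun s => Real.exp (-(v i * s))))]
        _ = S * Real.exp (S * t) * ∏ i, Real.exp (-(v i * t)) / v i := by
            congr 1
            refine Finset.prod_congr rfl fun i _ => ?_
            rw [integral_indicator measurableSet_Ici, SA.integral_Ici (hv i)]
        _ = S / (∏ i, v i) * Real.exp (u0 * t) := by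
            rw [Finset.prod_div_distrib, ← Real.exp_sum]
            rw [show (∑ i, -(v i * t)) = -((∑ i, v i) * t) by
              rw [Finset.sum_mul]; simp]
            rw [show u0 * t = S * t + -((∑ i, v i) * t) by rw [hSdef]; ring]
            rw [Real.exp_add]
            ring
    · rw [Set.indicator_of_notMem (by simpa using ht)]
      rw [funext (hFpos t ht)]
      simp
  -- integrable on product
  have hnormI : Integrable (fun t => ∫ x : Fin n → ℝ, ‖F t x‖) (volume : Measure ℝ) := by
    have heq : (fun t => ∫ x : Fin n → ℝ, ‖F t x‖) =
        (Iio 0).indicator (fun t => S / (∏ i, v i) * Real.exp (u0 * t)) := by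
      funext t
      rw [← hsecInt t]
      exact integral_congr_ae (Eventually.of_forall fun x => norm_of_nonneg (hFnonneg t x))
    rw [heq, integrable_indicator_iff measurableSet_Iio]
    exact (((SA.integrableOn_Iic hu0 0).mono_set Iio_subset_Iic_self).const_mul _)
  have hFint : Integrable (Function.uncurry F) ((volume : Measure ℝ).prod volume) := by
    rw [integrable_prod_iff hFmeas]
    exact ⟨Eventually.of_forall hsecI, hnormI⟩
  -- the marginal equals the target function
  have hgeq : ∀ x : Fin n → ℝ, (∫ t : ℝ, F t x) =
      Real.exp (-(∑ i, v i * x i - S * SA.M x)) := by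
    intro x
    have hE : MeasurableSet {t : ℝ | t < 0 ∧ ∀ i, t ≤ x i} := by
      have : {t : ℝ | t < 0 ∧ ∀ i, t ≤ x i} = Iio 0 ∩ ⋂ i, Iic (x i) := by
        ext t; simp [Set.mem_iInter]
      rw [this]
      exact measurableSet_Iio.inter (MeasurableSet.iInter fun i => measurableSet_Iic)
    have hind : ∀ t : ℝ, D.indicator (fun p => S * Real.exp (S * p.1)) (t, x) =
        {t : ℝ | t < 0 ∧ ∀ i, t ≤ x i}.indicator (fun t => S * Real.exp (S * t)) t := by
      intro t
      by_cases h : t < 0 ∧ ∀ i, t ≤ x i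
      · rw [Set.indicator_of_mem (show (t, x) ∈ D from h),
          Set.indicator_of_mem (show t ∈ {t : ℝ | t < 0 ∧ ∀ i, t ≤ x i} from h)]
      · rw [Set.indicator_of_notMem (show (t, x) ∉ D from h),
          Set.indicator_of_notMem (show t ∉ {t : ℝ | t < 0 ∧ ∀ i, t ≤ x i} from h)]
    have hEae : {t : ℝ | t < 0 ∧ ∀ i, t ≤ x i} =ᵐ[volume] Iic (SA.M x) := by
      have hEeq : {t : ℝ | t < 0 ∧ ∀ i, t ≤ x i} = Iio 0 ∩ Iic (SA.M x) := by
        ext t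
        simp only [Set.mem_setOf_eq, Set.mem_inter_iff, Set.mem_Iio, Set.mem_Iic]
        constructor
        · rintro ⟨ht, h⟩
          exact ⟨ht, (SA.le_M_iff x t).2 ⟨ht.le, h⟩⟩
        · rintro ⟨ht, h⟩
          exact ⟨ht, ((SA.le_M_iff x t).1 h).2⟩
      rw [hEeq]
      rcases lt_or_eq_of_le (SA.M_nonpos x) with hM | hM
      · have h2 : Iio (0:ℝ) ∩ Iic (SA.M x) = Iic (SA.M x) :=
          Set.inter_eq_right.2 (fun t ht => lt_of_le_of_lt ht hM)
        rw [h2]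
        exact EventuallyEq.rfl
      · rw [hM]
        have h2 : Iio (0:ℝ) ∩ Iic (0:ℝ) = Iio 0 :=
          Set.inter_eq_left.2 (fun t ht => Set.mem_Iic.2 (le_of_lt (Set.mem_Iio.1 ht)))
        rw [h2]
        exact Iio_ae_eq_Iic
    calc (∫ t : ℝ, F t x)
        = (∫ t : ℝ, {t : ℝ | t < 0 ∧ ∀ i, t ≤ x i}.indicator
            (fun t => S * Real.exp (S * t)) t) * ∏ i, Real.exp (-(v i * x i)) := by
          rw [← integral_mul_const]
          refine integral_congr_ae (Eventually.of_forall fun t => ?_)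
          simp only [hFdef]
          rw [hind t]
      _ = (∫ t in Iic (SA.M x), S * Real.exp (S * t)) * ∏ i, Real.exp (-(v i * x i)) := by
          rw [integral_indicator hE, setIntegral_congr_set hEae]
      _ = Real.exp (S * SA.M x) * ∏ i, Real.exp (-(v i * x i)) := by
          rw [integral_const_mul, SA.integral_Iic hS, ← mul_div_assoc, mul_comm S,
            mul_div_assoc, div_self (ne_of_gt hS), mul_one]
      _ = Real.exp (-(∑ i, v i * x i - S * SA.M x)) := by
          rw [← Real.exp_sum, ← Real.exp_add]
          congr 1
          rw [show (∑ i, -(v i * x i)) = -(∑ i, v i * x i) by simp]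
          ring
  have hgint : Integrable (fun x : Fin n → ℝ => ∫ t : ℝ, F t x) volume :=
    hFint.integral_prod_right
  constructor
  · exact hgint.congr (Eventually.of_forall hgeq)
  · rw [show (∫ x : Fin n → ℝ, Real.exp (-(∑ i, v i * x i - S * SA.M x))) =
        ∫ x : Fin n → ℝ, ∫ t : ℝ, F t x from
      integral_congr_ae (Eventually.of_forall fun x => (hgeq x).symm)]
    rw [← integral_integral_swap hFint]
    calc (∫ t : ℝ, ∫ x : Fin n → ℝ, F t x)
        = ∫ t : ℝ, (Iio 0).indicator (fun t => S / (∏ i, v i) * Real.exp (u0 * t)) t :=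
          integral_congr_ae (Eventually.of_forall hsecInt)
      _ = ∫ t in Iio 0, S / (∏ i, v i) * Real.exp (u0 * t) := integral_indicator measurableSet_Iio
      _ = S / (∏ i, v i) * (Real.exp (u0 * 0) / u0) := by
          rw [integral_const_mul, setIntegral_congr_set (Iio_ae_eq_Iic (a := (0:ℝ))),
            SA.integral_Iic hu0]
      _ = S / (u0 * ∏ i, v i) := by
          rw [mul_zero, Real.exp_zero, mul_one_div, div_div, mul_comm (∏ i, v i) u0]

theorem schwinger_simplex (k : ℕ) (hk : 2 ≤ k) (u : ℕ → ℝ)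
    (hu : ∀ i < k, 0 < u i) :
    Integrable (fun x : Fin (k - 1) → ℝ =>
        Real.exp (-(∑ i : Fin (k - 1), u (i.val + 1) * x i -
          (∑ i ∈ Finset.range k, u i) *
            (insert (0:ℝ) (Finset.image x Finset.univ)).min'
              (Finset.insert_nonempty _ _)))) ∧
    ∫ x : Fin (k - 1) → ℝ,
        Real.exp (-(∑ i : Fin (k - 1), u (i.val + 1) * x i -
          (∑ i ∈ Finset.range k, u i) *
            (insert (0:ℝ) (Finset.image x Finset.univ)).min'
              (Finset.insert_nonempty _ _))) =
      (∑ i ∈ Finset.range k, u i) / ∏ i ∈ Finset.range k, u i := by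
  obtain ⟨n, rfl⟩ : ∃ n, k = n + 1 := ⟨k - 1, (Nat.succ_pred_eq_of_pos (by omega)).symm⟩
  have hn : (n + 1) - 1 = n := rfl
  have hu0 : 0 < u 0 := hu 0 (by omega)
  have hv : ∀ i : Fin n, 0 < u (i.val + 1) := fun i => hu (i.val + 1) (by omega)
  have hsum : (∑ i ∈ Finset.range (n + 1), u i) = u 0 + ∑ i : Fin n, u (i.val + 1) := by
    rw [Finset.sum_range_succ', Fin.sum_univ_eq_sum_range (fun i => u (i + 1))]
    ring
  have hprod : (∏ i ∈ Finset.range (n + 1), u i) = u 0 * ∏ i : Fin n, u (i.val + 1) := by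
    rw [Finset.prod_range_succ', Fin.prod_univ_eq_prod_range (fun i => u (i + 1))]
    ring
  have main := SA.aux n (u 0) hu0 (fun i => u (i.val + 1)) hv
  rw [hsum, hprod]
  exact main
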